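/- arXiv:1108.4869 — 2 statements merged into one kernel-verified Lean document; each statement's English description precedes it below -/
import Mathlib

section
/- Let n ≥ 2 and let c_1, …, c_n be integers with c_i ≥ 1 for all i and c_n ≥ 2. Let D be the finite sequence of integers obtained by concatenating blocks B_1, …, B_n, where B_1 = (c_1 + 1), for even i with i < n the block B_i consists of c_i − 1 copies of 2, for odd i with 1 < i < n the block B_i = (c_i + 2), and the final block B_n = (c_n + 1) if n is odd, while B_n consists of c_n − 1 copies of 2 if n is even. Then [c_1, …, c_n]^+ = [D]^-. -/
/-- Positive continued fraction `[c₁, …, cₙ]⁺ = c₁ + 1/[c₂, …, cₙ]⁺` of a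
finite sequence of rationals (junk value `0` on the empty list). -/
def posCF : List ℚ → ℚ
  | [] => 0
  | [c] => c
  | c :: d :: t => c + 1 / posCF (d :: t)

/-- Negative continued fraction `[c₁, …, cₙ]⁻ = c₁ - 1/[c₂, …, cₙ]⁻` of a
finite sequence of rationals (junk value `0` on the empty list). -/
def negCF : List ℚ → ℚ
  | [] => 0
  | [c] => c
  | c :: d :: t => c - 1 / negCF (d :: t)

lemma negCF_cons (a : ℚ) (l : List ℚ) (h : l ≠ []) : negCF (a :: l) = a - 1 / negCF l := by
  cases l with
  | nil => exact absurd rfl h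
  | cons b t => simp [negCF]

lemma posCF_cons (a : ℚ) (l : List ℚ) (h : l ≠ []) : posCF (a :: l) = a + 1 / posCF l := by
  cases l with
  | nil => exact absurd rfl h
  | cons b t => simp [posCF]

lemma coeMap_eq (l : List ℤ) :
    negCF (l.map fun t => (t : ℚ)) = negCF (l.map fun t : ℤ => ((t:ℤ):ℚ)) := by
  congr 1
  simp [List.map_eq_flatMap]

lemma negCF_replicate_two (k : ℕ) (hk : 1 ≤ k) :
    negCF (List.replicate k (2:ℚ)) = ((k:ℚ)+1)/(k:ℚ) := by
  induction k with
  | zero => omega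
  | succ k IH =>
    rcases Nat.eq_or_lt_of_le hk with h | h
    · simp [← h, negCF]; norm_num
    · have hk1 : 1 ≤ k := by omega
      have hrep : List.replicate (k+1) (2:ℚ) = 2 :: List.replicate k 2 := rfl
      have hne : List.replicate k (2:ℚ) ≠ [] := by
        intro hcon
        have := congrArg List.length hcon
        simp at this
        omega
      rw [hrep, negCF_cons _ _ hne, IH hk1]
      have hkQ : (0:ℚ) < (k:ℚ) := by positivity
      push_cast
      field_simp
      ring

lemma negCF_rep_append (L : List ℚ) (hL : L ≠ []) (hz : 1 < negCF L) (k : ℕ) :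
    1 < negCF (List.replicate k 2 ++ L) ∧
    negCF (List.replicate k 2 ++ L) =
      (((k:ℚ)+1) * negCF L - (k:ℚ)) / ((k:ℚ) * negCF L - ((k:ℚ) - 1)) := by
  induction k with
  | zero =>
    constructor
    · simpa using hz
    · norm_num
  | succ k IH =>
    obtain ⟨h1, h2⟩ := IH
    have hne : List.replicate k (2:ℚ) ++ L ≠ [] := by simp [hL]
    set z := negCF L with hzdef
    have hk0 : (0:ℚ) ≤ (k:ℚ) := by positivity
    have hd : 0 < (k:ℚ) * z - ((k:ℚ)-1) := by nlinarith
    have hn : 0 < ((k:ℚ)+1) * z - (k:ℚ) := by nlinarith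
    have hrep : List.replicate (k+1) (2:ℚ) ++ L = 2 :: (List.replicate k 2 ++ L) := rfl
    rw [hrep, negCF_cons _ _ hne, h2]
    have hw1 : 1 < (((k:ℚ)+1)*z - (k:ℚ))/((k:ℚ)*z - ((k:ℚ)-1)) := by
      rw [lt_div_iff₀ hd]; nlinarith
    have hwpos : 0 < (((k:ℚ)+1)*z - (k:ℚ))/((k:ℚ)*z - ((k:ℚ)-1)) :=
      lt_trans one_pos hw1
    constructor
    · have h3 : 1/((((k:ℚ)+1)*z - (k:ℚ))/((k:ℚ)*z - ((k:ℚ)-1))) < 1 := by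
        rw [div_lt_one hwpos]; linarith
      linarith
    · rw [one_div_div]
      push_cast
      have hn' : ((k:ℚ)+1) * z - (k:ℚ) ≠ 0 := hn.ne'
      rw [add_sub_cancel_right, eq_div_iff hn', sub_mul, div_mul_cancel₀ _ hn']
      ring

/-- The transformed coefficient list (with head `c₁+2` instead of `c₁+1`). -/
def e : List ℤ → List ℤ
  | [] => []
  | [a] => [a + 1]
  | a :: b :: t => (a + 2) :: (List.replicate (b - 1).toNat 2 ++ e t)

lemma e_ne_nil (l : List ℤ) (h : l ≠ []) : e l ≠ [] := by
  cases l with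
  | nil => exact absurd rfl h
  | cons a t => cases t <;> simp [e]

lemma main : ∀ (c : List ℤ), c ≠ [] → (∀ x ∈ c, 1 ≤ x) →
    (∀ h : c ≠ [], 2 ≤ c.getLast h) →
    1 < posCF (c.map fun t : ℤ => ((t:ℤ):ℚ)) ∧
      negCF ((e c).map fun t : ℤ => ((t:ℤ):ℚ)) = posCF (c.map fun t : ℤ => ((t:ℤ):ℚ)) + 1 := by
  intro c
  induction c using e.induct with
  | case1 => intro h; exact absurd rfl h
  | case2 a =>
    intro _ _ hlast
    have ha : 2 ≤ a := by simpa using hlast (by simp)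
    have haQ : (2:ℚ) ≤ (a:ℚ) := by exact_mod_cast ha
    constructor
    · simp only [List.map_cons, List.map_nil, posCF]; linarith
    · simp [e, negCF, posCF]
      try push_cast
      try ring
  | case3 a b t IH =>
    intro _ hmem hlast
    have ha : 1 ≤ a := hmem a (by simp)
    have hb : 1 ≤ b := hmem b (by simp)
    have haQ : (1:ℚ) ≤ (a:ℚ) := by exact_mod_cast ha
    have hbQ : (1:ℚ) ≤ (b:ℚ) := by exact_mod_cast hb
    cases t with
    | nil =>
      have hb2 : 2 ≤ b := by simpa [List.getLast] using hlast (by simp)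
      have hbQ2 : (2:ℚ) ≤ (b:ℚ) := by exact_mod_cast hb2
      have hk1 : 1 ≤ (b-1).toNat := by omega
      have hbz : ((b-1).toNat : ℤ) = b - 1 := Int.toNat_of_nonneg (by omega)
      have hkQ : (((b-1).toNat : ℕ) : ℚ) = (b:ℚ) - 1 := by
        exact_mod_cast congrArg (fun z : ℤ => (z:ℚ)) hbz
      have hbQ0 : (0:ℚ) < (b:ℚ) := by linarith
      have hmap : (([a, b] : List ℤ).map fun t : ℤ => ((t:ℤ):ℚ)) = [(a:ℚ), (b:ℚ)] := by simp
      have hpos : posCF [(a:ℚ), (b:ℚ)] = a + 1/(b:ℚ) := by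
        rw [posCF_cons _ _ (by simp)]; rfl
      have hrepne : List.replicate (b-1).toNat (2:ℚ) ≠ [] := by
        intro hcon
        have := congrArg List.length hcon
        simp at this
        omega
      constructor
      · rw [hmap, hpos]
        have : 0 < 1/(b:ℚ) := by positivity
        linarith
      · have hemap : ((e [a, b]).map fun t : ℤ => ((t:ℤ):ℚ)) =
            ((a:ℚ) + 2) :: List.replicate (b-1).toNat (2:ℚ) := by
          simp [e]
        rw [hemap, hmap, hpos, negCF_cons _ _ hrepne, negCF_replicate_two _ hk1, hkQ]
        have hb1 : ((b:ℚ) - 1) ≠ 0 := by intro h; rw [sub_eq_zero] at h; linarith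
        have hb0 : (b:ℚ) ≠ 0 := hbQ0.ne'
        rw [sub_add_cancel]
        field_simp
        ring
    | cons u t' =>
      obtain ⟨hx, hneg⟩ := IH (by simp)
        (fun x hx => hmem x (List.mem_cons_of_mem _ (List.mem_cons_of_mem _ hx)))
        (fun h => by
          have := hlast (by simp)
          rwa [List.getLast_cons (by simp), List.getLast_cons (by simp)] at this)
      set x : ℚ := posCF ((u :: t').map fun t : ℤ => ((t:ℤ):ℚ)) with hxdef
      have hmapne : ((u :: t').map fun t : ℤ => ((t:ℤ):ℚ)) ≠ [] := by simp
      have hene : ((e (u :: t')).map fun t : ℤ => ((t:ℤ):ℚ)) ≠ [] := by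
        simp only [ne_eq, List.map_eq_nil_iff]
        exact e_ne_nil _ (by simp)
      have hbz : ((b-1).toNat : ℤ) = b - 1 := Int.toNat_of_nonneg (by omega)
      have hkQ : (((b-1).toNat : ℕ) : ℚ) = (b:ℚ) - 1 := by
        exact_mod_cast congrArg (fun z : ℤ => (z:ℚ)) hbz
      have hx0 : x ≠ 0 := by intro h; rw [h] at hx; norm_num at hx
      have hinvx : 0 < 1/x := by positivity
      have hbx : (0:ℚ) < (b:ℚ) + 1/x := by linarith
      have hpos2 : posCF ((b :: u :: t').map fun t : ℤ => ((t:ℤ):ℚ)) = (b:ℚ) + 1/x := by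
        simp only [List.map_cons]
        rw [posCF_cons _ _ (by simp), hxdef, List.map_cons]
      have hpos1 : posCF ((a :: b :: u :: t').map fun t : ℤ => ((t:ℤ):ℚ)) =
          (a:ℚ) + 1/((b:ℚ) + 1/x) := by
        simp only [List.map_cons]
        rw [posCF_cons _ _ (by simp)]
        simp only [List.map_cons] at hpos2
        rw [hpos2]
      have hz1 : 1 < negCF ((e (u :: t')).map fun t : ℤ => ((t:ℤ):ℚ)) := by
        rw [hneg]; linarith
      obtain ⟨hW1, hW2⟩ := negCF_rep_append _ hene hz1 (b-1).toNat
      have hemap : ((e (a :: b :: u :: t')).map fun t : ℤ => ((t:ℤ):ℚ)) =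
          ((a:ℚ) + 2) :: (List.replicate (b-1).toNat (2:ℚ) ++
            ((e (u :: t')).map fun t : ℤ => ((t:ℤ):ℚ))) := by
        simp [e]
      have happne : List.replicate (b-1).toNat (2:ℚ) ++
          ((e (u :: t')).map fun t : ℤ => ((t:ℤ):ℚ)) ≠ [] := by
        simp [hene]
      constructor
      · rw [hpos1]
        have : 0 < 1/((b:ℚ) + 1/x) := by positivity
        linarith
      · rw [hemap, negCF_cons _ _ happne, hW2, hneg, hkQ, hpos1]
        have hN : (0:ℚ) < ((b:ℚ) - 1 + 1) * (x + 1) - ((b:ℚ) - 1) := by nlinarith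
        have hD : (0:ℚ) < ((b:ℚ) - 1) * (x + 1) - ((b:ℚ) - 1 - 1) := by nlinarith
        have h1bx : (0:ℚ) < 1 + (b:ℚ) * x := by nlinarith
        rw [one_div_div]
        have hinv : (1 + (b:ℚ) * x) * (1 + (b:ℚ) * x)⁻¹ = 1 := mul_inv_cancel₀ h1bx.ne'
        field_simp [h1bx.ne']
        ring_nf
        linear_combination (-(1 + (b:ℚ) * x - x)) * hinv

def F (n : ℕ) (c : ℕ → ℤ) (j : ℕ) : List ℤ :=
  if j = 0 then [c 0 + 1]
  else if j = n - 1 then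
    (if n % 2 = 1 then [c j + 1] else List.replicate (c j - 1).toNat 2)
  else if j % 2 = 1 then List.replicate (c j - 1).toNat 2
  else [c j + 2]

lemma listEq : ∀ n, 2 ≤ n → ∀ c : ℕ → ℤ,
    ∃ r : List ℤ,
      (List.range n).flatMap (F n c) = (c 0 + 1) :: r ∧
      e ((List.range n).map c) = (c 0 + 2) :: r := by
  intro n
  induction n using Nat.strong_induction_on with
  | _ n IH =>
    intro hn c
    obtain ⟨m, rfl⟩ : ∃ m, n = m + 2 := ⟨n - 2, by omega⟩
    match m with
    | 0 =>
      refine ⟨List.replicate (c 1 - 1).toNat 2, ?_, ?_⟩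
      · have h0 : F 2 c 0 = [c 0 + 1] := by simp [F]
        have h1 : F 2 c 1 = List.replicate (c 1 - 1).toNat 2 := by
          unfold F; split_ifs <;> first | rfl | omega | contradiction | contradiction
        simp [List.range_succ, h0, h1]
      · simp [List.range_succ, e]
    | 1 =>
      refine ⟨List.replicate (c 1 - 1).toNat 2 ++ [c 2 + 1], ?_, ?_⟩
      · have h0 : F 3 c 0 = [c 0 + 1] := by simp [F]
        have h1 : F 3 c 1 = List.replicate (c 1 - 1).toNat 2 := by
          unfold F; split_ifs <;> first | rfl | omega | contradiction | contradiction
        have h2 : F 3 c 2 = [c 2 + 1] := by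
          unfold F; split_ifs <;> first | rfl | omega | contradiction | contradiction
        simp [List.range_succ, h0, h1, h2]
      · simp [List.range_succ, e]
    | (k + 2) =>
      obtain ⟨r, hf, he⟩ := IH (k + 2) (by omega) (by omega) (fun i => c (i + 2))
      -- expand the small flatMap
      rw [List.range_succ_eq_map, List.flatMap_cons, List.flatMap_map] at hf
      have hF0' : F (k + 2) (fun i => c (i + 2)) 0 = [(fun i => c (i + 2)) 0 + 1] := by simp [F]
      rw [hF0'] at hf
      have hT : (List.range (k + 1)).flatMap (fun j => F (k + 2) (fun i => c (i + 2)) (Nat.succ j)) = r := by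
        simpa using hf
      -- congruence between shifted big tail and small tail
      have hcong : (List.range (k + 1)).flatMap (fun j => F (k + 4) c (j + 3)) =
          (List.range (k + 1)).flatMap (fun j => F (k + 2) (fun i => c (i + 2)) (Nat.succ j)) := by
        refine List.flatMap_congr ?_
        intro j hj
        rw [List.mem_range] at hj
        show F (k + 4) c (j + 3) = F (k + 2) (fun i => c (i + 2)) (j + 1)
        unfold F
        split_ifs <;> first | rfl | omega | contradiction
      -- expand the big flatMap
      have hF0 : F (k + 4) c 0 = [c 0 + 1] := by simp [F]
      have hF1 : F (k + 4) c 1 = List.replicate (c 1 - 1).toNat 2 := by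
        unfold F; split_ifs <;> first | rfl | omega | contradiction
      have hF2 : F (k + 4) c 2 = [c 2 + 2] := by
        unfold F; split_ifs <;> first | rfl | omega | contradiction
      have hbig : (List.range (k + 4)).flatMap (F (k + 4) c) =
          (c 0 + 1) :: (List.replicate (c 1 - 1).toNat 2 ++ ((c 2 + 2) :: r)) := by
        rw [List.range_succ_eq_map, List.flatMap_cons, List.flatMap_map,
          List.range_succ_eq_map, List.flatMap_cons, List.flatMap_map,
          List.range_succ_eq_map, List.flatMap_cons, List.flatMap_map]
        have : (List.range (k + 1)).flatMap
            (fun j => F (k + 4) (fun i => c i) (j + 3)) = r := by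
          rw [show (fun j => F (k + 4) (fun i => c i) (j + 3)) =
            (fun j => F (k + 4) c (j + 3)) from rfl, hcong, hT]
        rw [hF0, hF1, hF2] at *
        simp only [this]
        simp
      -- the e side
      have hmap : (List.range (k + 4)).map c = c 0 :: c 1 :: (List.range (k + 2)).map (fun i => c (i + 2)) := by
        rw [List.range_succ_eq_map, List.map_cons, List.map_map,
          List.range_succ_eq_map, List.map_cons, List.map_map]
        rfl
      have heside : e ((List.range (k + 4)).map c) =
          (c 0 + 2) :: (List.replicate (c 1 - 1).toNat 2 ++ ((c 2 + 2) :: r)) := by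
        rw [hmap]
        show (c 0 + 2) :: (List.replicate (c 1 - 1).toNat 2 ++ e ((List.range (k + 2)).map (fun i => c (i + 2)))) =
          (c 0 + 2) :: (List.replicate (c 1 - 1).toNat 2 ++ ((c 2 + 2) :: r))
        rw [he]
      exact ⟨_, hbig, heside⟩

/-- `[c₁, …, cₙ]⁺ = [c₁+1, 2…2 (c₂-1 copies), c₃+2, 2…2 (c₄-1 copies), c₅+2, …]⁻`,
ending with `cₙ+1` if `n` is odd and with `cₙ-1` copies of `2` if `n` is even.
(Here the sequence is indexed by `0, …, n-1`, so the paper's `cᵢ` is `c (i-1)`.) -/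
theorem stmt1 (n : ℕ) (hn : 2 ≤ n) (c : ℕ → ℤ)
    (hc : ∀ i < n, 1 ≤ c i) (hclast : 2 ≤ c (n - 1)) :
    posCF ((List.range n).map fun i => (c i : ℚ)) =
      negCF (((List.range n).flatMap fun j =>
          if j = 0 then [c 0 + 1]
          else if j = n - 1 then
            (if n % 2 = 1 then [c j + 1] else List.replicate (c j - 1).toNat 2)
          else if j % 2 = 1 then List.replicate (c j - 1).toNat 2
          else [c j + 2]).map fun t => (t : ℚ)) := by
  have hFdef : (fun j => if j = 0 then [c 0 + 1]
      else if j = n - 1 then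
        (if n % 2 = 1 then [c j + 1] else List.replicate (c j - 1).toNat 2)
      else if j % 2 = 1 then List.replicate (c j - 1).toNat 2
      else [c j + 2]) = F n c := rfl
  rw [coeMap_eq, hFdef]
  obtain ⟨r, hf, he⟩ := listEq n hn c
  rw [hf]
  have hl : (List.range n).map c ≠ [] := by
    simp only [ne_eq, List.map_eq_nil_iff, List.range_eq_nil]
    omega
  have hmem : ∀ x ∈ (List.range n).map c, 1 ≤ x := by
    intro x hx
    simp only [List.mem_map, List.mem_range] at hx
    obtain ⟨i, hi, rfl⟩ := hx
    exact hc i hi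
  have hlast : ∀ h : (List.range n).map c ≠ [], 2 ≤ ((List.range n).map c).getLast h := by
    intro h
    rw [List.getLast_eq_getElem]
    have hlen : ((List.range n).map c).length = n := by simp
    simp only [hlen, List.getElem_map, List.getElem_range]
    exact hclast
  obtain ⟨hpos, hneg⟩ := main _ hl hmem hlast
  rw [he] at hneg
  have h2 : posCF (((List.range n).map c).map fun t : ℤ => ((t:ℤ):ℚ)) =
      posCF ((List.range n).map fun i => (c i : ℚ)) := by
    rw [List.map_map]
    rfl
  rw [h2] at hneg
  have hstep : negCF (((c 0 + 1) :: r).map fun t : ℤ => ((t:ℤ):ℚ)) =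
      negCF (((c 0 + 2) :: r).map fun t : ℤ => ((t:ℤ):ℚ)) - 1 := by
    cases r with
    | nil =>
      simp [negCF]
      push_cast
      ring
    | cons y r' =>
      simp only [List.map_cons]
      have hA := negCF_cons ((c 0 + 1 : ℤ) : ℚ)
        (((y:ℤ):ℚ) :: r'.map fun t : ℤ => ((t:ℤ):ℚ)) (by simp)
      have hB := negCF_cons ((c 0 + 2 : ℤ) : ℚ)
        (((y:ℤ):ℚ) :: r'.map fun t : ℤ => ((t:ℤ):ℚ)) (by simp)
      rw [hA, hB]
      push_cast
      ring
  rw [hstep, hneg]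
  ring
end

section
/- Let n ≥ 1 and let a_1, …, a_n be integers with a_1 ≥ 1, |a_i| ≥ 2 for 1 < i < n, and, if n ≥ 2, either |a_n| ≥ 2 or a_n = −1. Let A = A(a_1, …, a_n) be the symmetric tridiagonal n×n matrix with A_{i,i} = a_i and A_{i,i±1} = 1. Then A is nondegenerate and its signature equals #{i : a_i > 0} − #{i : a_i < 0}. -/
open Finset Matrix

/-- The signature of a Hermitian (real symmetric) matrix: the number of positive
eigenvalues minus the number of negative eigenvalues, counted with multiplicity
(junk value `0` for non-Hermitian matrices). -/
noncomputable def matSig {n : ℕ} (A : Matrix (Fin n) (Fin n) ℝ) : ℤ :=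
  if hA : A.IsHermitian then
    ((Finset.univ.filter fun i => 0 < hA.eigenvalues i).card : ℤ) -
    ((Finset.univ.filter fun i => hA.eigenvalues i < 0).card : ℤ)
  else 0

/-- The symmetric tridiagonal `n × n` real matrix with diagonal entries
`a 0, …, a (n-1)` and off-diagonal entries `1`. -/
def triMat (n : ℕ) (a : ℕ → ℤ) : Matrix (Fin n) (Fin n) ℝ :=
  Matrix.of fun i j : Fin n =>
    if (i : ℕ) = j then (a i : ℝ)
    else if (i : ℕ) + 1 = j ∨ (j : ℕ) + 1 = i then 1 else 0

/-! ### Auxiliary material -/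

/-- Core inertia counting lemma: if the weighted sum of squares with weights `e`
factors through an injective linear map into the weighted sum of squares with
weights `d`, then there are at most as many positive `e`-weights as positive
`d`-weights. -/
lemma count_pos_le_of_form {n : ℕ} (d e : Fin n → ℝ)
    (f : (Fin n → ℝ) →ₗ[ℝ] (Fin n → ℝ))
    (h : ∀ x, ∑ i, e i * x i ^ 2 = ∑ i, d i * f x i ^ 2) :
    (univ.filter fun i => 0 < e i).card ≤ (univ.filter fun i => 0 < d i).card := by
  classical
  let ext : ({i // 0 < e i} → ℝ) →ₗ[ℝ] (Fin n → ℝ) :=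
    Function.ExtendByZero.linearMap ℝ Subtype.val
  let proj : (Fin n → ℝ) →ₗ[ℝ] ({j // 0 < d j} → ℝ) :=
    LinearMap.funLeft ℝ ℝ Subtype.val
  have hext : ∀ (y : {i // 0 < e i} → ℝ) (i : Fin n),
      ext y i = if hi : 0 < e i then y ⟨i, hi⟩ else 0 := by
    intro y i
    by_cases hi : 0 < e i
    · simp only [dif_pos hi]
      have : ext y i = Function.extend Subtype.val y 0 i := rfl
      rw [this, Subtype.val_injective.extend_apply y 0 (⟨i, hi⟩ : {i // 0 < e i})]
    · simp only [dif_neg hi]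
      have : ext y i = Function.extend Subtype.val y 0 i := rfl
      rw [this, Function.extend_apply']
      · rfl
      · rintro ⟨⟨j, hj⟩, rfl⟩; exact hi hj
  have hg : Function.Injective (proj ∘ₗ f ∘ₗ ext) := by
    rw [← LinearMap.ker_eq_bot, LinearMap.ker_eq_bot']
    intro y hy
    by_contra hy0
    have h1 : 0 < ∑ i, e i * (ext y) i ^ 2 := by
      apply Finset.sum_pos'
      · intro i _
        rw [hext]
        split_ifs with hi
        · positivity
        · simp
      · obtain ⟨i0, hi0⟩ : ∃ i0, y i0 ≠ 0 := by
          by_contra hc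
          push_neg at hc
          exact hy0 (funext hc)
        refine ⟨i0.1, mem_univ _, ?_⟩
        rw [hext]
        rw [dif_pos i0.2]
        have : (0:ℝ) < y ⟨i0.1, i0.2⟩ ^ 2 := by
          have : y ⟨i0.1, i0.2⟩ = y i0 := by congr
          rw [this]; positivity
        exact mul_pos i0.2 this
    have h2 : ∑ i, d i * (f (ext y)) i ^ 2 ≤ 0 := by
      apply Finset.sum_nonpos
      intro j _
      by_cases hj : 0 < d j
      · have : f (ext y) j = 0 := by
          have := congrFun hy ⟨j, hj⟩
          exact this
        rw [this]; simp
      · push_neg at hj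
        have : (0:ℝ) ≤ f (ext y) j ^ 2 := sq_nonneg _
        exact mul_nonpos_of_nonpos_of_nonneg hj this
    have := h (ext y)
    linarith
  have hle := LinearMap.finrank_le_finrank_of_injective hg
  simpa [Module.finrank_fintype_fun_eq_card, Fintype.card_subtype] using hle

/-- The sequence of pivots (ratios of consecutive principal minors) of the
tridiagonal matrix. -/
noncomputable def rsq (a : ℕ → ℤ) : ℕ → ℝ
  | 0 => (a 0 : ℝ)
  | k + 1 => (a (k + 1) : ℝ) - 1 / rsq a k

lemma inv_bounds {r : ℝ} (h : 1 ≤ r ∨ r < -1) : -1 < 1 / r ∧ 1 / r ≤ 1 := by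
  rcases h with h | h
  · have h0 : 0 < r := lt_of_lt_of_le one_pos h
    constructor
    · have : 0 < 1 / r := by positivity
      linarith
    · rw [div_le_one h0]; linarith
  · have h0 : r < 0 := by linarith
    have h0' : r ≠ 0 := ne_of_lt h0
    have hmul : (1 / r) * r = 1 := one_div_mul_cancel h0'
    constructor
    · nlinarith
    · nlinarith [div_neg_of_pos_of_neg one_pos h0]

lemma abs_two_cases {b : ℤ} (h : 2 ≤ |b|) : ((b:ℝ) ≤ -2 ∨ (2:ℝ) ≤ (b:ℝ)) := by
  have : b ≤ -2 ∨ 2 ≤ b := by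
    rcases le_or_gt 0 b with h' | h'
    · rw [abs_of_nonneg h'] at h; omega
    · rw [abs_of_neg h'] at h; omega
  rcases this with h | h
  · left; exact_mod_cast h
  · right; exact_mod_cast h

lemma rsq_strong (n : ℕ) (a : ℕ → ℤ) (h1 : 1 ≤ a 0)
    (hmid : ∀ i, 0 < i → i < n - 1 → 2 ≤ |a i|) :
    ∀ k, k < n - 1 → ((1 ≤ rsq a k ∧ 0 < a k) ∨ (rsq a k < -1 ∧ a k < 0)) := by
  intro k
  induction k with
  | zero =>
    intro _
    left
    refine ⟨?_, by omega⟩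
    show (1:ℝ) ≤ (a 0 : ℝ); exact_mod_cast h1
  | succ k ih =>
    intro hk
    have hS := ih (by omega)
    have hb := inv_bounds (by rcases hS with ⟨h, _⟩ | ⟨h, _⟩; exacts [Or.inl h, Or.inr h])
    have hr : rsq a (k+1) = (a (k+1) : ℝ) - 1 / rsq a k := rfl
    rcases abs_two_cases (hmid (k+1) (by omega) hk) with h | h
    · right
      refine ⟨by rw [hr]; linarith [hb.1], ?_⟩
      have : (a (k+1) : ℝ) < 0 := by linarith
      exact_mod_cast this
    · left
      refine ⟨by rw [hr]; linarith [hb.2], ?_⟩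
      have : (0:ℝ) < (a (k+1) : ℝ) := by linarith
      exact_mod_cast this

lemma rsq_sign (n : ℕ) (hn : 1 ≤ n) (a : ℕ → ℤ) (h1 : 1 ≤ a 0)
    (hmid : ∀ i, 0 < i → i < n - 1 → 2 ≤ |a i|)
    (hlast : 2 ≤ n → (2 ≤ |a (n - 1)| ∨ a (n - 1) = -1)) :
    ∀ k, k < n → ((0 < rsq a k ∧ 0 < a k) ∨ (rsq a k < 0 ∧ a k < 0)) := by
  intro k hk
  rcases lt_or_eq_of_le (by omega : k ≤ n - 1) with h | h
  · rcases rsq_strong n a h1 hmid k h with ⟨h, h'⟩ | ⟨h, h'⟩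
    · left; exact ⟨by linarith, h'⟩
    · right; exact ⟨by linarith, h'⟩
  · rcases Nat.lt_or_ge n 2 with h2 | h2
    · have hk0 : k = 0 := by omega
      subst hk0
      left
      refine ⟨?_, by omega⟩
      show (0:ℝ) < (a 0 : ℝ)
      have : (1:ℝ) ≤ (a 0 : ℝ) := by exact_mod_cast h1
      linarith
    · obtain ⟨m, rfl⟩ : ∃ m, n = m + 2 := ⟨n - 2, by omega⟩
      have hkm : k = m + 1 := by omega
      subst hkm
      have hS := rsq_strong (m+2) a h1 hmid m (by omega)
      have hb := inv_bounds (by rcases hS with ⟨h, _⟩ | ⟨h, _⟩; exacts [Or.inl h, Or.inr h])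
      have hr : rsq a (m+1) = (a (m+1) : ℝ) - 1 / rsq a m := rfl
      have hml : m + 2 - 1 = m + 1 := by omega
      rw [hml] at hlast
      rcases hlast h2 with habs | hneg
      · rcases abs_two_cases habs with h | h
        · right
          refine ⟨by rw [hr]; linarith [hb.1], ?_⟩
          have : (a (m+1) : ℝ) < 0 := by linarith
          exact_mod_cast this
        · left
          refine ⟨by rw [hr]; linarith [hb.2], ?_⟩
          have : (0:ℝ) < (a (m+1) : ℝ) := by linarith
          exact_mod_cast this
      · right
        refine ⟨?_, by omega⟩
        rw [hr, hneg]
        push_cast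
        linarith [hb.1]

/-- The unit upper bidiagonal change of variables associated to the `LDLᵀ`
decomposition of the tridiagonal matrix. -/
noncomputable def Pmap (n : ℕ) (a : ℕ → ℤ) : (Fin n → ℝ) →ₗ[ℝ] (Fin n → ℝ) where
  toFun x := fun i =>
    x i + (if h : (i : ℕ) + 1 < n then x ⟨(i : ℕ) + 1, h⟩ else 0) / rsq a i
  map_add' x y := by
    ext i
    by_cases h : (i : ℕ) + 1 < n <;> simp [h] <;> ring
  map_smul' c x := by
    ext i
    by_cases h : (i : ℕ) + 1 < n <;> simp [h] <;> ring

lemma Pmap_injective (n : ℕ) (a : ℕ → ℤ) : Function.Injective (Pmap n a) := by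
  rw [← LinearMap.ker_eq_bot, LinearMap.ker_eq_bot']
  intro x hx
  by_contra hx0
  have hS : (univ.filter fun i => x i ≠ 0).Nonempty := by
    by_contra hc
    rw [Finset.not_nonempty_iff_eq_empty, Finset.filter_eq_empty_iff] at hc
    apply hx0
    ext i
    have := hc (Finset.mem_univ i)
    simpa using this
  set S := univ.filter fun i => x i ≠ 0 with hSdef
  let i0 := S.max' hS
  have hi0mem : i0 ∈ S := S.max'_mem hS
  have hi0 : x i0 ≠ 0 := by
    rw [hSdef, Finset.mem_filter] at hi0mem
    exact hi0mem.2
  have hnext : (if h : (i0 : ℕ) + 1 < n then x ⟨(i0 : ℕ) + 1, h⟩ else 0) = 0 := by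
    split_ifs with h
    · by_contra hne
      have hmem : (⟨(i0 : ℕ) + 1, h⟩ : Fin n) ∈ S := by
        rw [hSdef, Finset.mem_filter]; exact ⟨Finset.mem_univ _, hne⟩
      have := S.le_max' _ hmem
      have h2 : ((⟨(i0 : ℕ) + 1, h⟩ : Fin n) : ℕ) ≤ (i0 : ℕ) := this
      simp at h2
    · rfl
  have := congrFun hx i0
  have h3 : x i0 + (if h : (i0 : ℕ) + 1 < n then x ⟨(i0 : ℕ) + 1, h⟩ else 0) / rsq a i0 = 0 :=
    this
  rw [hnext] at h3
  simp at h3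
  exact hi0 h3

lemma range_identity (m : ℕ) (r A x : ℕ → ℝ)
    (hx : x (m + 1) = 0) (hr0 : A 0 = r 0)
    (hrk : ∀ k, 0 < k → A k = r k + 1 / r (k - 1))
    (hne : ∀ k, k < m + 1 → r k ≠ 0) :
    ∑ k ∈ range (m + 1), x k * (A k * x k + x (k + 1) + (if 0 < k then x (k - 1) else 0))
      = ∑ k ∈ range (m + 1), r k * (x k + x (k + 1) / r k) ^ 2 := by
  have hRHS : ∑ k ∈ range (m + 1), r k * (x k + x (k + 1) / r k) ^ 2
      = ∑ k ∈ range (m + 1),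
          (r k * x k ^ 2 + 2 * (x k * x (k + 1)) + x (k + 1) ^ 2 / r k) := by
    refine Finset.sum_congr rfl fun k hk => ?_
    have h := hne k (Finset.mem_range.mp hk)
    field_simp
    ring
  have hA : ∑ k ∈ range (m + 1), x k * (A k * x k) =
      ∑ k ∈ range (m + 1), (r k * x k ^ 2 + (if 0 < k then x k ^ 2 / r (k - 1) else 0)) := by
    refine Finset.sum_congr rfl fun k hk => ?_
    rcases Nat.eq_zero_or_pos k with h0 | h0
    · subst h0; simp [hr0]; ring
    · rw [hrk k h0, if_pos h0]
      have h' := hne (k - 1) (by have := Finset.mem_range.mp hk; omega)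
      field_simp
  have hshift1 : ∑ k ∈ range (m + 1), (if 0 < k then x k ^ 2 / r (k - 1) else 0)
      = ∑ k ∈ range m, x (k + 1) ^ 2 / r k := by
    rw [Finset.sum_range_succ']
    simp
  have hshift2 : ∑ k ∈ range (m + 1), x (k + 1) ^ 2 / r k
      = ∑ k ∈ range m, x (k + 1) ^ 2 / r k := by
    rw [Finset.sum_range_succ, hx]
    simp
  have hshift3 : ∑ k ∈ range (m + 1), x k * (if 0 < k then x (k - 1) else 0)
      = ∑ k ∈ range m, x (k + 1) * x k := by
    rw [Finset.sum_range_succ']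
    simp
  have hshift4 : ∑ k ∈ range (m + 1), x k * x (k + 1)
      = ∑ k ∈ range m, x k * x (k + 1) := by
    rw [Finset.sum_range_succ, hx]
    simp
  have hcross : ∑ k ∈ range m, x (k + 1) * x k = ∑ k ∈ range m, x k * x (k + 1) := by
    refine Finset.sum_congr rfl fun k _ => by ring
  calc ∑ k ∈ range (m + 1), x k * (A k * x k + x (k + 1) + (if 0 < k then x (k - 1) else 0))
      = ∑ k ∈ range (m + 1), (x k * (A k * x k) + x k * x (k + 1)
          + x k * (if 0 < k then x (k - 1) else 0)) := by
        refine Finset.sum_congr rfl fun k _ => by ring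
    _ = ∑ k ∈ range (m + 1), x k * (A k * x k) + ∑ k ∈ range (m + 1), x k * x (k + 1)
          + ∑ k ∈ range (m + 1), x k * (if 0 < k then x (k - 1) else 0) := by
        rw [Finset.sum_add_distrib, Finset.sum_add_distrib]
    _ = (∑ k ∈ range (m + 1), r k * x k ^ 2 + ∑ k ∈ range m, x (k + 1) ^ 2 / r k)
          + ∑ k ∈ range m, x k * x (k + 1) + ∑ k ∈ range m, x k * x (k + 1) := by
        rw [hA, Finset.sum_add_distrib, hshift1, hshift3, hshift4, hcross]
    _ = ∑ k ∈ range (m + 1),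
          (r k * x k ^ 2 + 2 * (x k * x (k + 1)) + x (k + 1) ^ 2 / r k) := by
        rw [Finset.sum_add_distrib, Finset.sum_add_distrib, hshift2]
        have h2 : ∑ k ∈ range (m + 1), 2 * (x k * x (k + 1))
            = (∑ k ∈ range m, x k * x (k + 1)) + ∑ k ∈ range m, x k * x (k + 1) := by
          rw [← Finset.mul_sum, hshift4]; ring
        rw [h2]
        ring
    _ = ∑ k ∈ range (m + 1), r k * (x k + x (k + 1) / r k) ^ 2 := hRHS.symm

lemma tri_form (n : ℕ) (hn : 1 ≤ n) (a : ℕ → ℤ)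
    (hne : ∀ k, k < n → rsq a k ≠ 0) (x : Fin n → ℝ) :
    x ⬝ᵥ (triMat n a) *ᵥ x = ∑ i : Fin n, rsq a i * (Pmap n a x i) ^ 2 := by
  classical
  set x' : ℕ → ℝ := fun k => if h : k < n then x ⟨k, h⟩ else 0 with hx'def
  have hx' : ∀ i : Fin n, x' (i : ℕ) = x i := fun i => dif_pos i.2
  have hA : x ⬝ᵥ (triMat n a) *ᵥ x
      = ∑ k ∈ range n, ∑ l ∈ range n,
          x' k * ((if k = l then (a k : ℝ) else if k + 1 = l ∨ l + 1 = k then 1 else 0) * x' l) := by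
    rw [dotProduct, ← Fin.sum_univ_eq_sum_range
      (fun k => ∑ l ∈ range n, x' k * ((if k = l then (a k : ℝ)
        else if k + 1 = l ∨ l + 1 = k then 1 else 0) * x' l)) n]
    refine Finset.sum_congr rfl fun i _ => ?_
    rw [← Fin.sum_univ_eq_sum_range
      (fun l => x' (i : ℕ) * ((if (i : ℕ) = l then (a (i : ℕ) : ℝ)
        else if (i : ℕ) + 1 = l ∨ l + 1 = (i : ℕ) then 1 else 0) * x' l)) n]
    rw [Matrix.mulVec, dotProduct, Finset.mul_sum]
    refine Finset.sum_congr rfl fun j _ => ?_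
    rw [hx' i, hx' j]
    rfl
  have hrow : ∀ k, k < n →
      (∑ l ∈ range n, ((if k = l then (a k : ℝ) else if k + 1 = l ∨ l + 1 = k then 1 else 0) * x' l))
        = (a k : ℝ) * x' k + x' (k + 1) + (if 0 < k then x' (k - 1) else 0) := by
    intro k hk
    have hsplit : ∀ l, ((if k = l then (a k : ℝ) else if k + 1 = l ∨ l + 1 = k then 1 else 0) * x' l)
        = (if k = l then (a k : ℝ) * x' l else 0) + (if k + 1 = l then x' l else 0)
          + (if l + 1 = k then x' l else 0) := by
      intro l
      split_ifs
      all_goals try ring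
      all_goals (exfalso; omega)
    rw [Finset.sum_congr rfl fun l _ => hsplit l, Finset.sum_add_distrib,
      Finset.sum_add_distrib]
    congr 1
    · congr 1
      · rw [Finset.sum_ite_eq, if_pos (Finset.mem_range.mpr hk)]
      · rw [Finset.sum_ite_eq]
        split_ifs with h
        · rfl
        · have hk1 : ¬ (k + 1 < n) := by rw [Finset.mem_range] at h; omega
          simp only [hx'def]
          rw [dif_neg hk1]
    · rcases Nat.eq_zero_or_pos k with h0 | h0
      · subst h0
        rw [if_neg (by omega)]
        exact Finset.sum_eq_zero fun l _ => by rw [if_neg (by omega)]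
      · obtain ⟨j, rfl⟩ : ∃ j, k = j + 1 := ⟨k - 1, by omega⟩
        rw [if_pos h0]
        have : ∀ l, (if l + 1 = j + 1 then x' l else 0) = (if j = l then x' l else 0) :=
          fun l => if_congr (by omega) rfl rfl
        rw [Finset.sum_congr rfl fun l _ => this l, Finset.sum_ite_eq,
          if_pos (Finset.mem_range.mpr (by omega))]
        simp
  have hD : ∑ i : Fin n, rsq a i * (Pmap n a x i) ^ 2
      = ∑ k ∈ range n, rsq a k * (x' k + x' (k + 1) / rsq a k) ^ 2 := by
    rw [← Fin.sum_univ_eq_sum_range (fun k => rsq a k * (x' k + x' (k + 1) / rsq a k) ^ 2) n]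
    refine Finset.sum_congr rfl fun i _ => ?_
    have hd : (if h : (i : ℕ) + 1 < n then x ⟨(i : ℕ) + 1, h⟩ else 0) = x' ((i : ℕ) + 1) :=
      rfl
    have hP : Pmap n a x i = x' (i : ℕ) + x' ((i : ℕ) + 1) / rsq a (i : ℕ) := by
      show x i + (if h : (i : ℕ) + 1 < n then x ⟨(i : ℕ) + 1, h⟩ else 0) / rsq a i
        = x' (i : ℕ) + x' ((i : ℕ) + 1) / rsq a (i : ℕ)
      rw [hd, hx' i]
    rw [hP]
  rw [hA, hD]
  rw [Finset.sum_congr rfl fun k hk => by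
    rw [← Finset.mul_sum, hrow k (Finset.mem_range.mp hk)]]
  obtain ⟨m, rfl⟩ : ∃ m, n = m + 1 := ⟨n - 1, by omega⟩
  exact range_identity m (rsq a) (fun k => (a k : ℝ)) x'
    (by simp only [hx'def]; rw [dif_neg (by omega)]) rfl
    (fun k hk => by
      obtain ⟨j, rfl⟩ : ∃ j, k = j + 1 := ⟨k - 1, by omega⟩
      show (a (j + 1) : ℝ) = rsq a (j + 1) + 1 / rsq a j
      rw [show rsq a (j + 1) = (a (j + 1) : ℝ) - 1 / rsq a j from rfl]
      ring)
    hne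

lemma tri_herm (n : ℕ) (a : ℕ → ℤ) : (triMat n a).IsHermitian := by
  have hsymm : ∀ i j : Fin n, triMat n a i j = triMat n a j i := by
    intro i j
    show (if (i : ℕ) = j then (a i : ℝ) else if (i:ℕ)+1 = j ∨ (j:ℕ)+1 = i then 1 else 0)
      = (if (j : ℕ) = i then (a j : ℝ) else if (j:ℕ)+1 = i ∨ (i:ℕ)+1 = j then 1 else 0)
    rcases eq_or_ne (i : ℕ) (j : ℕ) with h | h
    · rw [if_pos h, if_pos h.symm, h]
    · rw [if_neg h, if_neg (Ne.symm h)]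
      exact if_congr or_comm rfl rfl
  show (triMat n a)ᴴ = triMat n a
  ext i j
  rw [Matrix.conjTranspose_apply, star_trivial]
  exact hsymm j i

lemma eigen_form {n : ℕ} {A : Matrix (Fin n) (Fin n) ℝ} (hA : A.IsHermitian) (x : Fin n → ℝ) :
    ∑ i, hA.eigenvalues i * x i ^ 2
      = ((hA.eigenvectorUnitary : Matrix (Fin n) (Fin n) ℝ) *ᵥ x) ⬝ᵥ
          A *ᵥ ((hA.eigenvectorUnitary : Matrix (Fin n) (Fin n) ℝ) *ᵥ x) := by
  set U := (hA.eigenvectorUnitary : Matrix (Fin n) (Fin n) ℝ) with hU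
  have hstar : star U = Uᵀ := by
    ext i j
    simp [Matrix.star_apply]
  calc ∑ i, hA.eigenvalues i * x i ^ 2
      = x ⬝ᵥ (Matrix.diagonal (RCLike.ofReal ∘ hA.eigenvalues) *ᵥ x) := by
        rw [dotProduct]
        refine Finset.sum_congr rfl fun i _ => ?_
        rw [Matrix.mulVec_diagonal]
        simp
        ring
    _ = x ⬝ᵥ ((star U * A * U) *ᵥ x) := by rw [← hA.conjStarAlgAut_star_eigenvectorUnitary, Unitary.conjStarAlgAut_apply, Unitary.coe_star, star_star]
    _ = x ⬝ᵥ (star U *ᵥ (A *ᵥ (U *ᵥ x))) := by rw [Matrix.mulVec_mulVec, Matrix.mulVec_mulVec]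
    _ = (U *ᵥ x) ⬝ᵥ (A *ᵥ (U *ᵥ x)) := by
        rw [hstar, Matrix.mulVec_transpose,
          dotProduct_comm (U *ᵥ x), Matrix.dotProduct_mulVec, dotProduct_comm]

lemma unitary_mulVec_injective {n : ℕ} {A : Matrix (Fin n) (Fin n) ℝ} (hA : A.IsHermitian) :
    Function.Injective ((hA.eigenvectorUnitary : Matrix (Fin n) (Fin n) ℝ).mulVecLin) := by
  intro x y hxy
  have h2 := congrArg (fun v => (star (hA.eigenvectorUnitary : Matrix (Fin n) (Fin n) ℝ)) *ᵥ v) hxy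
  simpa [Matrix.mulVec_mulVec, Unitary.coe_star_mul_self, Matrix.one_mulVec] using h2

/-- If `a₁ ≥ 1`, `|aᵢ| ≥ 2` for `1 < i < n`, and (when `n ≥ 2`) either
`|aₙ| ≥ 2` or `aₙ = -1`, then the tridiagonal matrix `A(a₁, …, aₙ)` is
nondegenerate and its signature is `#{i : aᵢ > 0} - #{i : aᵢ < 0}`.
(Here the sequence is indexed by `0, …, n-1`, so the paper's `aᵢ` is `a (i-1)`.) -/
theorem stmt4 (n : ℕ) (hn : 1 ≤ n) (a : ℕ → ℤ)
    (h1 : 1 ≤ a 0)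
    (hmid : ∀ i, 0 < i → i < n - 1 → 2 ≤ |a i|)
    (hlast : 2 ≤ n → (2 ≤ |a (n - 1)| ∨ a (n - 1) = -1)) :
    (triMat n a).det ≠ 0 ∧
    matSig (triMat n a) =
      (((Finset.range n).filter fun i => 0 < a i).card : ℤ) -
      (((Finset.range n).filter fun i => a i < 0).card : ℤ) := by
  have hH : (triMat n a).IsHermitian := tri_herm n a
  have hsgn := rsq_sign n hn a h1 hmid hlast
  have hne : ∀ k, k < n → rsq a k ≠ 0 := fun k hk => by
    rcases hsgn k hk with ⟨h, _⟩ | ⟨h, _⟩; exacts [ne_of_gt h, ne_of_lt h]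
  set U := (hH.eigenvectorUnitary : Matrix (Fin n) (Fin n) ℝ) with hUdef
  set F0 := (Pmap n a) ∘ₗ (U.mulVecLin) with hF0def
  have hF0inj : Function.Injective F0 := by
    rw [hF0def, LinearMap.coe_comp]
    exact (Pmap_injective n a).comp (unitary_mulVec_injective hH)
  have hformF : ∀ x, ∑ i : Fin n, hH.eigenvalues i * x i ^ 2
      = ∑ i : Fin n, rsq a (i : ℕ) * (F0 x i) ^ 2 := by
    intro x
    rw [eigen_form hH x, tri_form n hn a hne (U *ᵥ x)]
    rfl
  have hFsurj : Function.Surjective F0 := LinearMap.injective_iff_surjective.mp hF0inj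
  let F := LinearEquiv.ofBijective F0 ⟨hF0inj, hFsurj⟩
  have hformS : ∀ y, ∑ i : Fin n, rsq a (i : ℕ) * y i ^ 2
      = ∑ i : Fin n, hH.eigenvalues i * (F.symm.toLinearMap y i) ^ 2 := by
    intro y
    have h := hformF (F.symm y)
    have h2 : F0 (F.symm y) = y := F.apply_symm_apply y
    rw [h2] at h
    exact h.symm
  have c1 := count_pos_le_of_form (fun i : Fin n => rsq a (i : ℕ)) hH.eigenvalues F0 hformF
  have c3 := count_pos_le_of_form hH.eigenvalues (fun i : Fin n => rsq a (i : ℕ))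
    F.symm.toLinearMap hformS
  have c2 := count_pos_le_of_form (fun i : Fin n => -(rsq a (i : ℕ)))
      (fun i => -(hH.eigenvalues i)) F0 (fun x => by
    have h := hformF x
    simp only [neg_mul]
    rw [Finset.sum_neg_distrib, Finset.sum_neg_distrib, h])
  have c4 := count_pos_le_of_form (fun i => -(hH.eigenvalues i))
      (fun i : Fin n => -(rsq a (i : ℕ))) F.symm.toLinearMap (fun y => by
    have h := hformS y
    simp only [neg_mul]
    rw [Finset.sum_neg_distrib, Finset.sum_neg_distrib, h])
  have hflip : ∀ (v : Fin n → ℝ),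
      (univ.filter fun i => 0 < -(v i)) = (univ.filter fun i => v i < 0) := by
    intro v
    apply Finset.filter_congr
    intro i _
    constructor <;> intro h <;> linarith
  rw [hflip, hflip] at c2 c4
  have epos : (univ.filter fun i => 0 < hH.eigenvalues i).card
      = (univ.filter fun i : Fin n => 0 < rsq a (i : ℕ)).card := le_antisymm c1 c3
  have eneg : (univ.filter fun i => hH.eigenvalues i < 0).card
      = (univ.filter fun i : Fin n => rsq a (i : ℕ) < 0).card := le_antisymm c2 c4
  -- the positive and negative pivots partition everything
  have hdisr : Disjoint (univ.filter fun i : Fin n => 0 < rsq a (i : ℕ))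
      (univ.filter fun i : Fin n => rsq a (i : ℕ) < 0) := by
    rw [Finset.disjoint_left]
    intro i hi1 hi2
    rw [Finset.mem_filter] at hi1 hi2
    linarith [hi1.2, hi2.2]
  have hunivr : (univ.filter fun i : Fin n => 0 < rsq a (i : ℕ))
      ∪ (univ.filter fun i : Fin n => rsq a (i : ℕ) < 0) = univ := by
    rw [Finset.eq_univ_iff_forall]
    intro i
    rw [Finset.mem_union, Finset.mem_filter, Finset.mem_filter]
    rcases hsgn i i.2 with ⟨hr, _⟩ | ⟨hr, _⟩
    · exact Or.inl ⟨mem_univ _, hr⟩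
    · exact Or.inr ⟨mem_univ _, hr⟩
  have hsum_r : (univ.filter fun i : Fin n => 0 < rsq a (i : ℕ)).card
      + (univ.filter fun i : Fin n => rsq a (i : ℕ) < 0).card = n := by
    rw [← Finset.card_union_of_disjoint hdisr, hunivr, Finset.card_univ, Fintype.card_fin]
  -- all eigenvalues are nonzero
  have hlnz : ∀ i, hH.eigenvalues i ≠ 0 := by
    have hdisl : Disjoint (univ.filter fun i => 0 < hH.eigenvalues i)
        (univ.filter fun i => hH.eigenvalues i < 0) := by
      rw [Finset.disjoint_left]
      intro i hi1 hi2
      rw [Finset.mem_filter] at hi1 hi2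
      linarith [hi1.2, hi2.2]
    have hunivl : (univ.filter fun i => 0 < hH.eigenvalues i)
        ∪ (univ.filter fun i => hH.eigenvalues i < 0) = univ := by
      apply Finset.eq_univ_of_card
      rw [Finset.card_union_of_disjoint hdisl, epos, eneg, hsum_r, Fintype.card_fin]
    intro i h0
    have hi : i ∈ (univ.filter fun i => 0 < hH.eigenvalues i)
        ∪ (univ.filter fun i => hH.eigenvalues i < 0) := by
      rw [hunivl]; exact mem_univ i
    rw [Finset.mem_union, Finset.mem_filter, Finset.mem_filter] at hi
    rcases hi with ⟨_, h⟩ | ⟨_, h⟩ <;> rw [h0] at h <;> exact lt_irrefl _ h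
  have hdet : (triMat n a).det ≠ 0 := by
    rw [hH.det_eq_prod_eigenvalues]
    refine Finset.prod_ne_zero_iff.mpr fun i _ => ?_
    simpa using hlnz i
  refine ⟨hdet, ?_⟩
  -- counting over `Fin n` versus `range n`
  classical
  have hbij : ∀ p : ℕ → Prop, ∀ inst : DecidablePred p,
      (univ.filter fun i : Fin n => p (i : ℕ)).card = ((range n).filter p).card := by
    intro p inst
    refine Finset.card_bij (fun i _ => (i : ℕ)) ?_ ?_ ?_
    · intro i hi
      rw [Finset.mem_filter] at hi ⊢
      exact ⟨Finset.mem_range.mpr i.2, hi.2⟩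
    · intro i _ j _ h
      exact Fin.ext h
    · intro k hk
      rw [Finset.mem_filter, Finset.mem_range] at hk
      exact ⟨⟨k, hk.1⟩, by rw [Finset.mem_filter]; exact ⟨mem_univ _, hk.2⟩, rfl⟩
  have hposra : ((range n).filter fun k => 0 < rsq a k).card
      = ((range n).filter fun k => 0 < a k).card := by
    congr 1
    apply Finset.filter_congr
    intro k hk
    rcases hsgn k (Finset.mem_range.mp hk) with ⟨hr, ha⟩ | ⟨hr, ha⟩
    · exact iff_of_true hr ha
    · exact iff_of_false (by linarith) (by omega)
  have hnegra : ((range n).filter fun k => rsq a k < 0).card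
      = ((range n).filter fun k => a k < 0).card := by
    congr 1
    apply Finset.filter_congr
    intro k hk
    rcases hsgn k (Finset.mem_range.mp hk) with ⟨hr, ha⟩ | ⟨hr, ha⟩
    · exact iff_of_false (by linarith) (by omega)
    · exact iff_of_true hr ha
  have e1 : (univ.filter fun i : Fin n => 0 < rsq a (i : ℕ)).card
      = ((range n).filter fun k => 0 < rsq a k).card := hbij (fun k => 0 < rsq a k) _
  have e2 : (univ.filter fun i : Fin n => rsq a (i : ℕ) < 0).card
      = ((range n).filter fun k => rsq a k < 0).card := hbij (fun k => rsq a k < 0) _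
  unfold matSig
  rw [dif_pos hH]
  rw [epos, eneg, e1, e2, hposra, hnegra]
end
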